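/- Let u be a classical solution of the n-vortex equation with u(r) ≥ 0 for all r ∈ (0,R). If there exists a point r₁ ∈ (0,R) with u(r₁) = 0, then u is identically zero on [0,R]. -/

import Mathlib

open MeasureTheory Set Filter

noncomputable section

/-- The Bessel function `J₀`. -/
def besselJ0 (x : ℝ) : ℝ :=
  ∑' m : ℕ, (-1 : ℝ) ^ m * (x / 2) ^ (2 * m) / ((Nat.factorial m : ℝ)) ^ 2

/-- The smallest positive zero of `J₀` (≈ 2.404826). -/
def besselR0 : ℝ := sInf {x : ℝ | 0 < x ∧ besselJ0 x = 0}

/-- `u` is a classical solution of the `n`-vortex equation with parameters `(α, n, κ, R)`. -/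
def IsVortexSol (α : ℝ) (n : ℤ) (κ R : ℝ) (u : ℝ → ℝ) : Prop :=
  ContinuousOn u (Icc 0 R) ∧
  (∀ r ∈ Ioo (0 : ℝ) R, DifferentiableAt ℝ u r ∧ DifferentiableAt ℝ (deriv u) r) ∧
  u 0 = 0 ∧ u R = 0 ∧
  ∀ r ∈ Ioo (0 : ℝ) R,
    deriv (fun s => s * deriv u s) r - ((n : ℝ) ^ 2 / r) * u r
      + 2 * r * (u r) ^ 3 / (1 + α * (u r) ^ 2) - 2 * κ * r * u r = 0

/-- `u` has finite energy. -/
def FiniteEnergy (α R : ℝ) (u : ℝ → ℝ) : Prop :=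
  IntegrableOn
    (fun r => r * (deriv u r) ^ 2 + (u r) ^ 2 / r + r * Real.log (1 + α * (u r) ^ 2))
    (Ioo 0 R)

/-- The energy flux `Q(u) = 2π ∫₀^R r u(r)² dr`. -/
def fluxQ (R : ℝ) (u : ℝ → ℝ) : ℝ := 2 * Real.pi * ∫ r in Ioo (0 : ℝ) R, r * (u r) ^ 2

/-- The tent function with parameters `a` and `b`. -/
def tent (a b : ℝ) : ℝ → ℝ := fun r => if r ≤ a then (b / a) * r else (b / a) * (2 * a - r)

/-- The action functional `I_κ`. -/
def actI (α : ℝ) (n : ℤ) (κ R : ℝ) (u : ℝ → ℝ) : ℝ :=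
  (1 / 2) * ∫ r in Ioo (0 : ℝ) R,
    (r * (deriv u r) ^ 2 + ((n : ℝ) ^ 2 / r) * (u r) ^ 2
      - 2 * (α⁻¹ - κ) * r * (u r) ^ 2 + 2 * (α ^ 2)⁻¹ * r * Real.log (1 + α * (u r) ^ 2))

/-- The action functional `𝓘`. -/
def actI0 (α : ℝ) (n : ℤ) (R : ℝ) (u : ℝ → ℝ) : ℝ :=
  (1 / 2) * ∫ r in Ioo (0 : ℝ) R,
    (r * (deriv u r) ^ 2 + ((n : ℝ) ^ 2 / r) * (u r) ^ 2
      - 2 * α⁻¹ * r * (u r) ^ 2 + 2 * (α ^ 2)⁻¹ * r * Real.log (1 + α * (u r) ^ 2))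

/-- The functional `γ_κ`. -/
def gammaK (α : ℝ) (n : ℤ) (κ R : ℝ) (u : ℝ → ℝ) : ℝ :=
  (1 / 2) * ∫ r in Ioo (0 : ℝ) R,
    (r * (deriv u r) ^ 2 + ((n : ℝ) ^ 2 / r) * (u r) ^ 2
      - 2 * (α⁻¹ - κ) * r * (u r) ^ 2 + 2 * α⁻¹ * r * (u r) ^ 2 / (1 + α * (u r) ^ 2))

/-- Membership in the class `X`. -/
def MemX (R : ℝ) (u : ℝ → ℝ) : Prop :=
  ContinuousOn u (Icc 0 R) ∧ ContDiffOn ℝ 1 u (Ioo 0 R) ∧ u 0 = 0 ∧ u R = 0 ∧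
    IntegrableOn (fun r => r * (deriv u r) ^ 2 + (u r) ^ 2 / r) (Ioo 0 R)

/-- Membership in the class `X`, allowing finitely many exceptional points. -/
def MemX' (R : ℝ) (u : ℝ → ℝ) : Prop :=
  ContinuousOn u (Icc 0 R) ∧ (∃ S : Finset ℝ, ContDiffOn ℝ 1 u (Ioo 0 R \ ↑S)) ∧
    u 0 = 0 ∧ u R = 0 ∧
    IntegrableOn (fun r => r * (deriv u r) ^ 2 + (u r) ^ 2 / r) (Ioo 0 R)

/-- The admissible class `𝒜`. -/
def Admissible (α R : ℝ) (v : ℝ → ℝ) : Prop :=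
  (∃ K : NNReal, LipschitzOnWith K v (Icc 0 R)) ∧ v 0 = 0 ∧ v R = 0 ∧ FiniteEnergy α R v

end

/-- Lipschitz estimate for `x ↦ x³/(1+αx²)` on a ball. -/
lemma cube_lip (α M x y : ℝ) (hα : 0 ≤ α) (hx : |x| ≤ M) (hy : |y| ≤ M) :
    |x ^ 3 / (1 + α * x ^ 2) - y ^ 3 / (1 + α * y ^ 2)| ≤ (3 * M ^ 2 + α * M ^ 4) * |x - y| := by
  have hdx : (0:ℝ) < 1 + α * x ^ 2 := by positivity
  have hdy : (0:ℝ) < 1 + α * y ^ 2 := by positivity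
  have hxM := abs_le.mp hx
  have hyM := abs_le.mp hy
  have hx2 : x ^ 2 ≤ M ^ 2 := sq_le_sq' hxM.1 hxM.2
  have hy2 : y ^ 2 ≤ M ^ 2 := sq_le_sq' hyM.1 hyM.2
  have key : x ^ 3 / (1 + α * x ^ 2) - y ^ 3 / (1 + α * y ^ 2)
      = ((x - y) * (x ^ 2 + x * y + y ^ 2 + α * x ^ 2 * y ^ 2))
        / ((1 + α * x ^ 2) * (1 + α * y ^ 2)) := by
    field_simp
    ring
  rw [key, abs_div]
  have hD : (1:ℝ) ≤ |(1 + α * x ^ 2) * (1 + α * y ^ 2)| := by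
    rw [abs_of_pos (by positivity)]
    nlinarith [mul_nonneg hα (sq_nonneg x), mul_nonneg hα (sq_nonneg y), mul_nonneg (mul_nonneg hα (sq_nonneg x)) (mul_nonneg hα (sq_nonneg y))]
  calc |(x - y) * (x ^ 2 + x * y + y ^ 2 + α * x ^ 2 * y ^ 2)|
        / |(1 + α * x ^ 2) * (1 + α * y ^ 2)|
      ≤ |(x - y) * (x ^ 2 + x * y + y ^ 2 + α * x ^ 2 * y ^ 2)| / 1 :=
        div_le_div_of_nonneg_left (abs_nonneg _) one_pos hD
    _ = |x - y| * |x ^ 2 + x * y + y ^ 2 + α * x ^ 2 * y ^ 2| := by rw [div_one, abs_mul]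
    _ ≤ |x - y| * (3 * M ^ 2 + α * M ^ 4) := by
        apply mul_le_mul_of_nonneg_left _ (abs_nonneg _)
        rw [abs_le]
        constructor <;> nlinarith [sq_nonneg (x + y), sq_nonneg (x - y), sq_nonneg (x*y),
          mul_le_mul hx2 hy2 (sq_nonneg y) (sq_nonneg M)]
    _ = (3 * M ^ 2 + α * M ^ 4) * |x - y| := mul_comm _ _

/-- a nonnegative solution with an interior zero is identically zero. -/
theorem stmt18 (α : ℝ) (hα : 0 < α) (n : ℤ) (hn : 1 ≤ |n|) (κ R : ℝ) (hR : 0 < R)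
    (u : ℝ → ℝ) (hu : IsVortexSol α n κ R u)
    (hnn : ∀ r ∈ Ioo (0 : ℝ) R, 0 ≤ u r)
    (r₁ : ℝ) (hr₁ : r₁ ∈ Ioo (0 : ℝ) R) (hz : u r₁ = 0) :
    ∀ r ∈ Icc (0 : ℝ) R, u r = 0 := by
  obtain ⟨hc, hdiff, h0, hRz, heqn⟩ := hu
  -- the derivative vanishes at the interior minimum r₁
  have hd0 : deriv u r₁ = 0 := by
    apply IsLocalMin.deriv_eq_zero
    filter_upwards [Ioo_mem_nhds hr₁.1 hr₁.2] with x hx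
    rw [hz]; exact hnn x hx
  -- main claim: u vanishes on the open interval
  have main : ∀ r ∈ Ioo (0 : ℝ) R, u r = 0 := by
    intro r hr
    -- choose a compact interval [a₀,b₀] ⊂ (0,R) containing r and r₁
    set a₀ : ℝ := min r r₁ / 2 with ha₀def
    set b₀ : ℝ := (max r r₁ + R) / 2 with hb₀def
    have ha₀pos : 0 < a₀ := by
      have := lt_min hr.1 hr₁.1; positivity
    have haltr : a₀ < r := lt_of_lt_of_le (by simpa using half_lt_self (lt_min hr.1 hr₁.1))
      (min_le_left _ _)
    have haltr₁ : a₀ < r₁ := lt_of_lt_of_le (by simpa using half_lt_self (lt_min hr.1 hr₁.1))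
      (min_le_right _ _)
    have hbgtr : r < b₀ := by
      have h1 : max r r₁ < R := max_lt hr.2 hr₁.2
      have := le_max_left r r₁
      rw [hb₀def]; linarith
    have hbgtr₁ : r₁ < b₀ := by
      have h1 : max r r₁ < R := max_lt hr.2 hr₁.2
      have := le_max_right r r₁
      rw [hb₀def]; linarith
    have hbltR : b₀ < R := by
      have h1 : max r r₁ < R := max_lt hr.2 hr₁.2
      rw [hb₀def]; linarith
    have hab : a₀ < b₀ := haltr.trans hbgtr
    have hsub : Icc a₀ b₀ ⊆ Ioo (0 : ℝ) R := fun x hx =>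
      ⟨ha₀pos.trans_le hx.1, lt_of_le_of_lt hx.2 hbltR⟩
    have hsub' : Ioo a₀ b₀ ⊆ Ioo (0 : ℝ) R := fun x hx => hsub (Ioo_subset_Icc_self hx)
    -- the trajectory F = (u, u')
    set F : ℝ → ℝ × ℝ := fun t => (u t, deriv u t) with hFdef
    have hFcont : ContinuousOn F (Icc a₀ b₀) := by
      intro t ht
      have ht' := hsub ht
      exact ((hdiff t ht').1.continuousAt.prodMk (hdiff t ht').2.continuousAt).continuousWithinAt
    obtain ⟨M, hM⟩ := isCompact_Icc.exists_bound_of_continuousOn hFcont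
    have hM0 : 0 ≤ M := le_trans (norm_nonneg _) (hM a₀ ⟨le_rfl, hab.le⟩)
    -- the vector field
    set C : ℝ := 1 / a₀ + (n : ℝ) ^ 2 / a₀ ^ 2 + 2 * (3 * M ^ 2 + α * M ^ 4) + 2 * |κ| + 1
      with hCdef
    have hC0 : 0 ≤ C := by
      have h1 : 0 < 1 / a₀ := by positivity
      have h2 : 0 ≤ (n : ℝ) ^ 2 / a₀ ^ 2 := by positivity
      have h3 : 0 ≤ 3 * M ^ 2 + α * M ^ 4 := by positivity
      have h4 : 0 ≤ |κ| := abs_nonneg _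
      rw [hCdef]; linarith
    have hC1 : 1 ≤ C := by
      have h1 : 0 < 1 / a₀ := by positivity
      have h2 : 0 ≤ (n : ℝ) ^ 2 / a₀ ^ 2 := by positivity
      have h3 : 0 ≤ 3 * M ^ 2 + α * M ^ 4 := by positivity
      have h4 : 0 ≤ |κ| := abs_nonneg _
      rw [hCdef]; linarith
    set V : ℝ → ℝ × ℝ → ℝ × ℝ := fun t p =>
      (p.2, -p.2 / max t a₀ + ((n : ℝ) ^ 2 / (max t a₀) ^ 2) * p.1
        - 2 * p.1 ^ 3 / (1 + α * p.1 ^ 2) + 2 * κ * p.1) with hVdef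
    -- Lipschitz bound
    have hlip : ∀ t : ℝ, LipschitzOnWith C.toNNReal (V t)
        (Metric.closedBall (0 : ℝ × ℝ) M) := by
      intro t
      have hs : a₀ ≤ max t a₀ := le_max_right _ _
      have hspos : 0 < max t a₀ := lt_of_lt_of_le ha₀pos hs
      apply LipschitzOnWith.of_dist_le_mul
      intro p hp q hq
      rw [Real.coe_toNNReal _ hC0]
      have hp1 : |p.1| ≤ M := by
        have := mem_closedBall_zero_iff.mp hp
        exact le_trans (by simpa using norm_fst_le p) this
      have hq1 : |q.1| ≤ M := by
        have := mem_closedBall_zero_iff.mp hq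
        exact le_trans (by simpa using norm_fst_le q) this
      rw [Prod.dist_eq]
      have hd1 : dist p.1 q.1 ≤ dist p q := by rw [Prod.dist_eq]; exact le_max_left _ _
      have hd2 : dist p.2 q.2 ≤ dist p q := by rw [Prod.dist_eq]; exact le_max_right _ _
      have hdnn : 0 ≤ dist p q := dist_nonneg
      apply max_le
      · calc dist (V t p).1 (V t q).1 = dist p.2 q.2 := rfl
          _ ≤ dist p q := hd2
          _ ≤ C * dist p q := le_mul_of_one_le_left hdnn hC1
      · -- second component
        simp only [Real.dist_eq] at hd1 hd2 ⊢
        have h1 : |(-p.2 / max t a₀) - (-q.2 / max t a₀)| ≤ (1 / a₀) * |p.2 - q.2| := by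
          have heq : (-p.2 / max t a₀) - (-q.2 / max t a₀) = -((p.2 - q.2) / max t a₀) := by
            ring
          rw [heq, abs_neg, abs_div, abs_of_pos hspos]
          calc |p.2 - q.2| / max t a₀ ≤ |p.2 - q.2| / a₀ := by gcongr
            _ = (1 / a₀) * |p.2 - q.2| := by ring
        have h2 : |((n : ℝ) ^ 2 / (max t a₀) ^ 2) * p.1 - ((n : ℝ) ^ 2 / (max t a₀) ^ 2) * q.1|
            ≤ ((n : ℝ) ^ 2 / a₀ ^ 2) * |p.1 - q.1| := by
          rw [← mul_sub, abs_mul]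
          gcongr
          rw [abs_of_nonneg (by positivity)]
          apply div_le_div_of_nonneg_left (by positivity) (by positivity)
          exact pow_le_pow_left₀ ha₀pos.le hs 2
        have h3 : |2 * p.1 ^ 3 / (1 + α * p.1 ^ 2) - 2 * q.1 ^ 3 / (1 + α * q.1 ^ 2)|
            ≤ 2 * (3 * M ^ 2 + α * M ^ 4) * |p.1 - q.1| := by
          have := cube_lip α M p.1 q.1 hα.le hp1 hq1
          calc |2 * p.1 ^ 3 / (1 + α * p.1 ^ 2) - 2 * q.1 ^ 3 / (1 + α * q.1 ^ 2)|
              = 2 * |p.1 ^ 3 / (1 + α * p.1 ^ 2) - q.1 ^ 3 / (1 + α * q.1 ^ 2)| := by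
                rw [show 2 * p.1 ^ 3 / (1 + α * p.1 ^ 2) - 2 * q.1 ^ 3 / (1 + α * q.1 ^ 2)
                  = 2 * (p.1 ^ 3 / (1 + α * p.1 ^ 2) - q.1 ^ 3 / (1 + α * q.1 ^ 2)) by ring,
                  abs_mul, abs_two]
            _ ≤ 2 * ((3 * M ^ 2 + α * M ^ 4) * |p.1 - q.1|) := by linarith
            _ = 2 * (3 * M ^ 2 + α * M ^ 4) * |p.1 - q.1| := by ring
        have h4 : |2 * κ * p.1 - 2 * κ * q.1| ≤ 2 * |κ| * |p.1 - q.1| := by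
          rw [← mul_sub, abs_mul]
          have : |2 * κ| = 2 * |κ| := by rw [abs_mul, abs_two]
          rw [this]
        calc |(V t p).2 - (V t q).2|
            ≤ |(-p.2 / max t a₀) - (-q.2 / max t a₀)|
              + |((n : ℝ) ^ 2 / (max t a₀) ^ 2) * p.1 - ((n : ℝ) ^ 2 / (max t a₀) ^ 2) * q.1|
              + |2 * p.1 ^ 3 / (1 + α * p.1 ^ 2) - 2 * q.1 ^ 3 / (1 + α * q.1 ^ 2)|
              + |2 * κ * p.1 - 2 * κ * q.1| := by
              have : (V t p).2 - (V t q).2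
                  = ((-p.2 / max t a₀) - (-q.2 / max t a₀))
                    + (((n : ℝ) ^ 2 / (max t a₀) ^ 2) * p.1
                       - ((n : ℝ) ^ 2 / (max t a₀) ^ 2) * q.1)
                    + (-(2 * p.1 ^ 3 / (1 + α * p.1 ^ 2) - 2 * q.1 ^ 3 / (1 + α * q.1 ^ 2)))
                    + (2 * κ * p.1 - 2 * κ * q.1) := by
                simp only [hVdef]; ring
              rw [this]
              calc _ ≤ |((-p.2 / max t a₀) - (-q.2 / max t a₀))
                    + (((n : ℝ) ^ 2 / (max t a₀) ^ 2) * p.1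
                       - ((n : ℝ) ^ 2 / (max t a₀) ^ 2) * q.1)
                    + (-(2 * p.1 ^ 3 / (1 + α * p.1 ^ 2) - 2 * q.1 ^ 3 / (1 + α * q.1 ^ 2)))|
                    + |2 * κ * p.1 - 2 * κ * q.1| := abs_add_le _ _
                _ ≤ _ := by
                    have := abs_add_le (((-p.2 / max t a₀) - (-q.2 / max t a₀))
                      + (((n : ℝ) ^ 2 / (max t a₀) ^ 2) * p.1
                         - ((n : ℝ) ^ 2 / (max t a₀) ^ 2) * q.1))
                      (-(2 * p.1 ^ 3 / (1 + α * p.1 ^ 2) - 2 * q.1 ^ 3 / (1 + α * q.1 ^ 2)))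
                    have h' := abs_add_le ((-p.2 / max t a₀) - (-q.2 / max t a₀))
                      (((n : ℝ) ^ 2 / (max t a₀) ^ 2) * p.1
                       - ((n : ℝ) ^ 2 / (max t a₀) ^ 2) * q.1)
                    rw [abs_neg] at this
                    linarith
          _ ≤ (1 / a₀) * |p.2 - q.2| + ((n : ℝ) ^ 2 / a₀ ^ 2) * |p.1 - q.1|
              + 2 * (3 * M ^ 2 + α * M ^ 4) * |p.1 - q.1| + 2 * |κ| * |p.1 - q.1| := by
              linarith
          _ ≤ C * dist p q := by
              have k1 : (1 / a₀) * |p.2 - q.2| ≤ (1 / a₀) * dist p q :=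
                mul_le_mul_of_nonneg_left hd2 (by positivity)
              have k2 : ((n : ℝ) ^ 2 / a₀ ^ 2) * |p.1 - q.1|
                  ≤ ((n : ℝ) ^ 2 / a₀ ^ 2) * dist p q :=
                mul_le_mul_of_nonneg_left hd1 (by positivity)
              have k3 : 2 * (3 * M ^ 2 + α * M ^ 4) * |p.1 - q.1|
                  ≤ 2 * (3 * M ^ 2 + α * M ^ 4) * dist p q :=
                mul_le_mul_of_nonneg_left hd1 (by positivity)
              have k4 : 2 * |κ| * |p.1 - q.1| ≤ 2 * |κ| * dist p q :=
                mul_le_mul_of_nonneg_left hd1 (by positivity)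
              have expand : C * dist p q = (1 / a₀) * dist p q
                  + ((n : ℝ) ^ 2 / a₀ ^ 2) * dist p q
                  + 2 * (3 * M ^ 2 + α * M ^ 4) * dist p q + 2 * |κ| * dist p q
                  + dist p q := by
                rw [hCdef]; ring
              rw [expand]; linarith
    -- F solves the ODE
    have hF' : ∀ t ∈ Ioo a₀ b₀, HasDerivAt F (V t (F t)) t ∧
        F t ∈ Metric.closedBall (0 : ℝ × ℝ) M := by
      intro t ht
      have ht' := hsub' ht
      have htpos : 0 < t := ht'.1
      have hmax : max t a₀ = t := max_eq_left ht.1.le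
      have hden : (0:ℝ) < 1 + α * (u t) ^ 2 := by positivity
      have hdu := (hdiff t ht').1
      have hddu := (hdiff t ht').2
      have hprod : HasDerivAt (fun s => s * deriv u s)
          (1 * deriv u t + t * deriv (deriv u) t) t :=
        (hasDerivAt_id t).mul hddu.hasDerivAt
      have hpd : deriv (fun s => s * deriv u s) t
          = deriv u t + t * deriv (deriv u) t := by
        rw [hprod.deriv]; ring
      have heqt := heqn t ht'
      rw [hpd] at heqt
      have ht0 : t ≠ 0 := ne_of_gt htpos
      have hD0 : (1 + α * (u t) ^ 2) ≠ 0 := ne_of_gt hden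
      have hw : deriv (deriv u) t = -(deriv u t) / t + ((n : ℝ) ^ 2 / t ^ 2) * u t
          - 2 * (u t) ^ 3 / (1 + α * (u t) ^ 2) + 2 * κ * u t := by
        have h1 : t * deriv (deriv u) t = -(deriv u t) + ((n : ℝ) ^ 2 / t) * u t
            - 2 * t * u t ^ 3 / (1 + α * u t ^ 2) + 2 * κ * t * u t := by
          linarith [heqt]
        have h2 : t * (-(deriv u t) / t + ((n : ℝ) ^ 2 / t ^ 2) * u t
              - 2 * (u t) ^ 3 / (1 + α * (u t) ^ 2) + 2 * κ * u t)
            = -(deriv u t) + ((n : ℝ) ^ 2 / t) * u t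
              - 2 * t * u t ^ 3 / (1 + α * u t ^ 2) + 2 * κ * t * u t := by
          field_simp
        exact mul_left_cancel₀ ht0 (h1.trans h2.symm)
      constructor
      · have : HasDerivAt F (deriv u t, deriv (deriv u) t) t :=
          (hdu.hasDerivAt).prodMk hddu.hasDerivAt
        convert this using 1
        simp only [hVdef, hFdef, hmax]
        rw [hw]
      · rw [Metric.mem_closedBall, dist_zero_right]
        exact hM t (Ioo_subset_Icc_self ht)
    -- the zero function solves the ODE
    have hG' : ∀ t ∈ Ioo a₀ b₀, HasDerivAt (fun _ : ℝ => ((0 : ℝ), (0 : ℝ)))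
        (V t ((0 : ℝ), (0 : ℝ))) t ∧ ((0 : ℝ), (0 : ℝ)) ∈ Metric.closedBall (0 : ℝ × ℝ) M := by
      intro t ht
      constructor
      · have : V t ((0 : ℝ), (0 : ℝ)) = (0, 0) := by
          simp [hVdef]
        rw [this]
        exact hasDerivAt_const t _
      · simpa using hM0
    -- uniqueness
    have huniq := ODE_solution_unique_of_mem_Ioo (fun t _ => hlip t)
      (show r₁ ∈ Ioo a₀ b₀ from ⟨haltr₁, hbgtr₁⟩) hF' hG'
      (show F r₁ = ((0:ℝ), (0:ℝ)) by simp [hFdef, hz, hd0])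
    have h := huniq (show r ∈ Ioo a₀ b₀ from ⟨haltr, hbgtr⟩)
    exact congrArg Prod.fst h
  -- conclude on the closed interval
  intro r hr
  rcases eq_or_lt_of_le hr.1 with h0' | h0'
  · rw [← h0']; exact h0
  rcases eq_or_lt_of_le hr.2 with hR' | hR'
  · rw [hR']; exact hRz
  exact main r ⟨h0', hR'⟩
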